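/- arXiv:1807.04643 — 2 statements merged into one kernel-verified Lean document; each statement's English description precedes it below -/
import Mathlib

section
/- Let y = Ax + v, where A ∈ ℝ^{m×n}, x ∈ ℝⁿ is K-sparse with nonempty support Ω = supp(x), Ω^c ≠ ∅, and ‖v‖₂ ≤ ε. Suppose δ ∈ [0,1) satisfies the RIP of order K+1 for A with δ < 1/√(K+1), and suppose min_{i∈Ω}|x_i| > 2ε/(1 − √(K+1)·δ). Then for every subset S ⊆ Ω with |S| < |Ω|, the residual r = P_S^⊥ y = P_S^⊥(Ax + v) satisfies max_{i∈Ω∖S} |⟨r, A_i⟩| > max_{j∈Ω^c} |⟨r, A_j⟩|; that is, the index selected by the OMP greedy rule at this step necessarily belongs to Ω. -/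
open Matrix Finset

/-- The Euclidean (`ℓ₂`) norm of a real vector. -/
noncomputable def l2norm {ι : Type*} [Fintype ι] (v : ι → ℝ) : ℝ :=
  Real.sqrt (∑ i, v i ^ 2)

/-- The support `{i : x i ≠ 0}` of a vector, as a `Finset`. -/
noncomputable def sparseSupport {n : ℕ} (x : Fin n → ℝ) : Finset (Fin n) :=
  Finset.univ.filter (fun i => x i ≠ 0)

/-- `δ` satisfies the restricted isometry property of order `k` for `A`:
`(1-δ)‖x‖₂² ≤ ‖Ax‖₂² ≤ (1+δ)‖x‖₂²` for all `x` with at most `k` nonzero entries. -/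
def RIP {m n : ℕ} (A : Matrix (Fin m) (Fin n) ℝ) (k : ℕ) (δ : ℝ) : Prop :=
  ∀ x : Fin n → ℝ, (sparseSupport x).card ≤ k →
    (1 - δ) * (∑ i, x i ^ 2) ≤ (∑ i, (A.mulVec x) i ^ 2) ∧
    (∑ i, (A.mulVec x) i ^ 2) ≤ (1 + δ) * (∑ i, x i ^ 2)

/-- The submatrix `A_S` of `A` containing only the columns indexed by `S`. -/
def colSub {m n : ℕ} (A : Matrix (Fin m) (Fin n) ℝ) (S : Finset (Fin n)) :
    Matrix (Fin m) {j // j ∈ S} ℝ :=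
  fun i j => A i j.1

/-- The orthogonal complement projector `P_S^⊥ = I - A_S (A_Sᵀ A_S)⁻¹ A_Sᵀ`
(equal to `I` when `S = ∅`). -/
noncomputable def projPerp {m n : ℕ} (A : Matrix (Fin m) (Fin n) ℝ) (S : Finset (Fin n)) :
    Matrix (Fin m) (Fin m) ℝ :=
  1 - colSub A S * ((colSub A S)ᵀ * colSub A S)⁻¹ * (colSub A S)ᵀ

/-- The subvector `x_T`, extended by zero outside `T` (so that `A_T x_T = A (restrictVec x T)`). -/
def restrictVec {n : ℕ} (x : Fin n → ℝ) (T : Finset (Fin n)) : Fin n → ℝ :=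
  fun i => if i ∈ T then x i else 0

/-- `‖(w i)_{i ∈ T}‖_∞ = max_{i ∈ T} |w i|` (equal to `0` when `T = ∅`). -/
noncomputable def supAbs {n : ℕ} (T : Finset (Fin n)) (w : Fin n → ℝ) : ℝ :=
  sSup ((fun i => |w i|) '' ↑T)


lemma sumsq_eq_dot {k : ℕ} (w : Fin k → ℝ) : ∑ i, w i ^ 2 = w ⬝ᵥ w := by
  simp [dotProduct, sq]

lemma dot_self_nonneg {k : ℕ} (w : Fin k → ℝ) : 0 ≤ w ⬝ᵥ w := by
  rw [← sumsq_eq_dot]; positivity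

lemma dot_sq_le {k : ℕ} (v q : Fin k → ℝ) : (v ⬝ᵥ q) ^ 2 ≤ (v ⬝ᵥ v) * (q ⬝ᵥ q) := by
  have := Finset.sum_mul_sq_le_sq_mul_sq Finset.univ v q
  simpa [dotProduct, ← sumsq_eq_dot, sq] using this

lemma abs_dot_le {k : ℕ} (v q : Fin k → ℝ) :
    |v ⬝ᵥ q| ≤ Real.sqrt (v ⬝ᵥ v) * Real.sqrt (q ⬝ᵥ q) := by
  rw [← Real.sqrt_sq_eq_abs, ← Real.sqrt_mul (dot_self_nonneg v)]
  exact Real.sqrt_le_sqrt (dot_sq_le v q)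

lemma mem_sparseSupport {n : ℕ} (x : Fin n → ℝ) (i : Fin n) :
    i ∈ sparseSupport x ↔ x i ≠ 0 := by simp [sparseSupport]

lemma projPerp_symm {m n : ℕ} (A : Matrix (Fin m) (Fin n) ℝ) (S : Finset (Fin n)) :
    (projPerp A S)ᵀ = projPerp A S := by
  unfold projPerp
  rw [transpose_sub, transpose_one, transpose_mul, transpose_mul, transpose_transpose,
    Matrix.transpose_nonsing_inv, transpose_mul, transpose_transpose, Matrix.mul_assoc]

lemma projPerp_mul_colSub {m n : ℕ} (A : Matrix (Fin m) (Fin n) ℝ) (S : Finset (Fin n))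
    (hG : IsUnit ((colSub A S)ᵀ * colSub A S).det) :
    projPerp A S * colSub A S = 0 := by
  unfold projPerp
  rw [Matrix.sub_mul, Matrix.one_mul, Matrix.mul_assoc, Matrix.mul_assoc,
    Matrix.nonsing_inv_mul _ hG, Matrix.mul_one, sub_self]

lemma projPerp_idem {m n : ℕ} (A : Matrix (Fin m) (Fin n) ℝ) (S : Finset (Fin n))
    (hG : IsUnit ((colSub A S)ᵀ * colSub A S).det) :
    projPerp A S * projPerp A S = projPerp A S := by
  have hPQ : projPerp A S *
      (colSub A S * ((colSub A S)ᵀ * colSub A S)⁻¹ * (colSub A S)ᵀ) = 0 := by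
    rw [Matrix.mul_assoc (colSub A S), ← Matrix.mul_assoc (projPerp A S),
      projPerp_mul_colSub A S hG, Matrix.zero_mul]
  nth_rewrite 2 [show projPerp A S =
    1 - colSub A S * ((colSub A S)ᵀ * colSub A S)⁻¹ * (colSub A S)ᵀ from rfl]
  rw [Matrix.mul_sub, Matrix.mul_one, hPQ, sub_zero]

lemma mulVec_restrict {m n : ℕ} (A : Matrix (Fin m) (Fin n) ℝ) (S : Finset (Fin n))
    (c : Fin n → ℝ) (hc : ∀ i, i ∉ S → c i = 0) :
    A *ᵥ c = colSub A S *ᵥ (fun j : {j // j ∈ S} => c j.1) := by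
  funext i
  simp only [Matrix.mulVec, dotProduct, colSub]
  rw [Finset.sum_coe_sort S (fun k => A i k * c k)]
  exact (Finset.sum_subset (Finset.subset_univ S)
    (fun k _ hk => by rw [hc k hk, mul_zero])).symm

lemma projPerp_annihilate {m n : ℕ} (A : Matrix (Fin m) (Fin n) ℝ) (S : Finset (Fin n))
    (hG : IsUnit ((colSub A S)ᵀ * colSub A S).det)
    (c : Fin n → ℝ) (hc : ∀ i, i ∉ S → c i = 0) :
    projPerp A S *ᵥ (A *ᵥ c) = 0 := by
  rw [mulVec_restrict A S c hc, Matrix.mulVec_mulVec, projPerp_mul_colSub A S hG,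
    Matrix.zero_mulVec]

lemma projPerp_repr {m n : ℕ} (A : Matrix (Fin m) (Fin n) ℝ) (S : Finset (Fin n))
    (z : Fin n → ℝ) :
    ∃ c : Fin n → ℝ, (∀ i, i ∉ S → c i = 0) ∧
      projPerp A S *ᵥ (A *ᵥ z) = A *ᵥ (z - c) := by
  classical
  set d : {j // j ∈ S} → ℝ :=
    (((colSub A S)ᵀ * colSub A S)⁻¹ * (colSub A S)ᵀ) *ᵥ (A *ᵥ z) with hd
  refine ⟨fun i => if h : i ∈ S then d ⟨i, h⟩ else 0, fun i hi => dif_neg hi, ?_⟩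
  have h1 : A *ᵥ (fun i => if h : i ∈ S then d ⟨i, h⟩ else 0) = colSub A S *ᵥ d := by
    rw [mulVec_restrict A S _ (fun i hi => dif_neg hi)]
    have hfun : (fun j : {j // j ∈ S} => if h : (j : Fin n) ∈ S then d ⟨j, h⟩ else 0) = d := by
      funext j
      exact dif_pos j.2
    rw [hfun]
  have h2 : colSub A S *ᵥ d =
      (colSub A S * (((colSub A S)ᵀ * colSub A S)⁻¹ * (colSub A S)ᵀ)) *ᵥ (A *ᵥ z) := by
    rw [hd, Matrix.mulVec_mulVec]
  rw [Matrix.mulVec_sub, h1, h2]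
  unfold projPerp
  rw [Matrix.sub_mulVec, Matrix.one_mulVec, Matrix.mul_assoc]

lemma projPerp_dot_swap {m n : ℕ} (A : Matrix (Fin m) (Fin n) ℝ) (S : Finset (Fin n))
    (q w : Fin m → ℝ) :
    (projPerp A S *ᵥ q) ⬝ᵥ w = q ⬝ᵥ (projPerp A S *ᵥ w) := by
  rw [Matrix.dotProduct_mulVec, ← Matrix.mulVec_transpose, projPerp_symm]

lemma projPerp_idem_vec {m n : ℕ} (A : Matrix (Fin m) (Fin n) ℝ) (S : Finset (Fin n))
    (hG : IsUnit ((colSub A S)ᵀ * colSub A S).det) (q : Fin m → ℝ) :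
    projPerp A S *ᵥ (projPerp A S *ᵥ q) = projPerp A S *ᵥ q := by
  rw [Matrix.mulVec_mulVec, projPerp_idem A S hG]

lemma projPerp_contract {m n : ℕ} (A : Matrix (Fin m) (Fin n) ℝ) (S : Finset (Fin n))
    (hG : IsUnit ((colSub A S)ᵀ * colSub A S).det) (w : Fin m → ℝ) :
    (projPerp A S *ᵥ w) ⬝ᵥ (projPerp A S *ᵥ w) ≤ w ⬝ᵥ w := by
  set p := projPerp A S *ᵥ w with hp
  have hpp : p ⬝ᵥ p = p ⬝ᵥ w := by
    calc p ⬝ᵥ p = (projPerp A S *ᵥ p) ⬝ᵥ w := by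
          rw [projPerp_dot_swap, hp, projPerp_idem_vec A S hG]
          exact dotProduct_comm _ _
    _ = p ⬝ᵥ w := by rw [hp, projPerp_idem_vec A S hG]
  have h0 : 0 ≤ (w - p) ⬝ᵥ (w - p) := dot_self_nonneg _
  rw [sub_dotProduct, dotProduct_sub, dotProduct_sub] at h0
  have hc : w ⬝ᵥ p = p ⬝ᵥ w := dotProduct_comm _ _
  linarith

lemma sparseSupport_sub_subset {n : ℕ} (S : Finset (Fin n)) (z c : Fin n → ℝ)
    (hc : ∀ i, i ∉ S → c i = 0) :
    sparseSupport (z - c) ⊆ sparseSupport z ∪ S := by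
  intro i hi
  rw [mem_sparseSupport] at hi
  rw [Finset.mem_union, mem_sparseSupport]
  by_cases h : i ∈ S
  · exact Or.inr h
  · refine Or.inl fun h0 => hi ?_
    simp [Pi.sub_apply, h0, hc i h]

lemma sumsq_sub_ge {n : ℕ} (S : Finset (Fin n)) (z c : Fin n → ℝ)
    (hz : ∀ i ∈ S, z i = 0) (hc : ∀ i, i ∉ S → c i = 0) :
    ∑ i, z i ^ 2 ≤ ∑ i, (z - c) i ^ 2 := by
  apply Finset.sum_le_sum
  intro i _
  by_cases h : i ∈ S
  · simp only [Pi.sub_apply, hz i h, zero_sub, neg_sq]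
    simpa using sq_nonneg (c i)
  · rw [Pi.sub_apply, hc i h, sub_zero]

/-- Projected RIP: `P_S^⊥ A` obeys the same RIP bounds on vectors vanishing on `S`. -/
lemma projRIP {m n K : ℕ} (A : Matrix (Fin m) (Fin n) ℝ) (S : Finset (Fin n)) (δ : ℝ)
    (hδ1 : δ ≤ 1) (hRIP : RIP A (K + 1) δ)
    (hG : IsUnit ((colSub A S)ᵀ * colSub A S).det)
    (z : Fin n → ℝ) (hz : ∀ i ∈ S, z i = 0)
    (hcard : (sparseSupport z ∪ S).card ≤ K + 1) :
    (1 - δ) * (z ⬝ᵥ z) ≤ (projPerp A S *ᵥ (A *ᵥ z)) ⬝ᵥ (projPerp A S *ᵥ (A *ᵥ z)) ∧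
    (projPerp A S *ᵥ (A *ᵥ z)) ⬝ᵥ (projPerp A S *ᵥ (A *ᵥ z)) ≤ (1 + δ) * (z ⬝ᵥ z) := by
  constructor
  · obtain ⟨c, hc, hrepr⟩ := projPerp_repr A S z
    rw [hrepr, ← sumsq_eq_dot, ← sumsq_eq_dot]
    have hcard2 : (sparseSupport (z - c)).card ≤ K + 1 :=
      le_trans (Finset.card_le_card (sparseSupport_sub_subset S z c hc)) hcard
    have h1 := (hRIP (z - c) hcard2).1
    have h2 : (1 - δ) * ∑ i, z i ^ 2 ≤ (1 - δ) * ∑ i, (z - c) i ^ 2 := by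
      apply mul_le_mul_of_nonneg_left (sumsq_sub_ge S z c hz hc)
      linarith
    linarith
  · have hcard2 : (sparseSupport z).card ≤ K + 1 :=
      le_trans (Finset.card_le_card (Finset.subset_union_left)) hcard
    have h1 := (hRIP z hcard2).2
    have h2 := projPerp_contract A S hG (A *ᵥ z)
    rw [← sumsq_eq_dot, ← sumsq_eq_dot] at *
    linarith

lemma gram_isUnit {m n K : ℕ} (A : Matrix (Fin m) (Fin n) ℝ) (S : Finset (Fin n)) (δ : ℝ)
    (hδ1 : δ < 1) (hRIP : RIP A (K + 1) δ) (hScard : S.card ≤ K + 1) :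
    IsUnit ((colSub A S)ᵀ * colSub A S).det := by
  classical
  have hpd : ((colSub A S)ᵀ * colSub A S).PosDef := by
    refine Matrix.posDef_iff_dotProduct_mulVec.mpr ⟨?_, ?_⟩
    · simpa using Matrix.isHermitian_conjTranspose_mul_self (colSub A S)
    · intro c hc
      have hq : star c ⬝ᵥ ((colSub A S)ᵀ * colSub A S) *ᵥ c
          = (colSub A S *ᵥ c) ⬝ᵥ (colSub A S *ᵥ c) := by
        rw [star_trivial, ← Matrix.mulVec_mulVec, Matrix.dotProduct_mulVec,
          ← Matrix.mulVec_transpose, transpose_transpose]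
      set ct : Fin n → ℝ := fun i => if h : i ∈ S then c ⟨i, h⟩ else 0 with hct
      have hrestr : colSub A S *ᵥ c = A *ᵥ ct := by
        rw [mulVec_restrict A S ct (fun i hi => dif_neg hi)]
        have hfun : (fun j : {j // j ∈ S} => ct j.1) = c := by
          funext j
          exact dif_pos j.2
        rw [hfun]
      have hsupp : (sparseSupport ct).card ≤ K + 1 := by
        refine le_trans (Finset.card_le_card ?_) hScard
        intro i hi
        rw [mem_sparseSupport] at hi
        by_contra h
        exact hi (dif_neg h)
      have hrip := (hRIP ct hsupp).1
      obtain ⟨j, hj⟩ : ∃ j, c j ≠ 0 := Function.ne_iff.mp hc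
      have hctj : ct j.1 ≠ 0 := by
        rw [hct]
        simpa [dif_pos j.2] using hj
      have hpos : 0 < ∑ i, ct i ^ 2 := by
        have h1 : 0 < ct j.1 ^ 2 := by positivity
        have h2 : ct j.1 ^ 2 ≤ ∑ i, ct i ^ 2 :=
          Finset.single_le_sum (fun i _ => sq_nonneg (ct i)) (Finset.mem_univ j.1)
        linarith
      have : 0 < (1 - δ) * ∑ i, ct i ^ 2 := by
        apply mul_pos (by linarith) hpos
      rw [hq, hrestr, ← sumsq_eq_dot]
      linarith
  exact isUnit_iff_ne_zero.mpr (ne_of_gt hpd.det_pos)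

lemma dot_expand {k : ℕ} (c d : ℝ) (y₁ y₂ : Fin k → ℝ) :
    (c • y₁ + d • y₂) ⬝ᵥ (c • y₁ + d • y₂)
      = c ^ 2 * (y₁ ⬝ᵥ y₁) + 2 * c * d * (y₁ ⬝ᵥ y₂) + d ^ 2 * (y₂ ⬝ᵥ y₂) := by
  simp only [add_dotProduct, dotProduct_add, smul_dotProduct, dotProduct_smul,
    smul_eq_mul, dotProduct_comm y₂ y₁]
  ring

lemma sparseSupport_combo {n : ℕ} (a b : ℝ) (z₁ z₂ : Fin n → ℝ) :
    sparseSupport (b • z₁ + a • z₂) ⊆ sparseSupport z₁ ∪ sparseSupport z₂ := by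
  intro i hi
  rw [mem_sparseSupport] at hi
  rw [Finset.mem_union, mem_sparseSupport, mem_sparseSupport]
  by_contra h
  push_neg at h
  apply hi
  simp [h.1, h.2]

/-- RIP-type inner product lower bound for the projected matrix. -/
lemma projRIP_inner {m n K : ℕ} (A : Matrix (Fin m) (Fin n) ℝ) (S : Finset (Fin n)) (δ : ℝ)
    (hδ1 : δ ≤ 1) (hRIP : RIP A (K + 1) δ)
    (hG : IsUnit ((colSub A S)ᵀ * colSub A S).det)
    (z₁ z₂ : Fin n → ℝ) (h1 : ∀ i ∈ S, z₁ i = 0) (h2 : ∀ i ∈ S, z₂ i = 0)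
    (hcard : (sparseSupport z₁ ∪ sparseSupport z₂ ∪ S).card ≤ K + 1) :
    z₁ ⬝ᵥ z₂ - δ * Real.sqrt (z₁ ⬝ᵥ z₁) * Real.sqrt (z₂ ⬝ᵥ z₂)
      ≤ (projPerp A S *ᵥ (A *ᵥ z₁)) ⬝ᵥ (projPerp A S *ᵥ (A *ᵥ z₂)) := by
  set a := Real.sqrt (z₁ ⬝ᵥ z₁) with ha
  set b := Real.sqrt (z₂ ⬝ᵥ z₂) with hb
  by_cases haz : z₁ = 0
  · subst haz
    simp [Matrix.mulVec_zero, ha]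
  by_cases hbz : z₂ = 0
  · subst hbz
    simp [Matrix.mulVec_zero, hb]
  have ha2 : a ^ 2 = z₁ ⬝ᵥ z₁ := Real.sq_sqrt (dot_self_nonneg z₁)
  have hb2 : b ^ 2 = z₂ ⬝ᵥ z₂ := Real.sq_sqrt (dot_self_nonneg z₂)
  have hapos : 0 < a := by
    rcases (Real.sqrt_pos.mpr (lt_of_le_of_ne (dot_self_nonneg z₁)
      (fun h => haz (dotProduct_self_eq_zero.mp h.symm)))) with h
    exact h
  have hbpos : 0 < b := by
    rcases (Real.sqrt_pos.mpr (lt_of_le_of_ne (dot_self_nonneg z₂)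
      (fun h => hbz (dotProduct_self_eq_zero.mp h.symm)))) with h
    exact h
  set p := b • z₁ + a • z₂ with hp
  set q := b • z₁ + (-a) • z₂ with hq
  have hpS : ∀ i ∈ S, p i = 0 := fun i hi => by simp [hp, h1 i hi, h2 i hi]
  have hqS : ∀ i ∈ S, q i = 0 := fun i hi => by simp [hq, h1 i hi, h2 i hi]
  have hcardp : (sparseSupport p ∪ S).card ≤ K + 1 := by
    refine le_trans (Finset.card_le_card ?_) hcard
    exact Finset.union_subset_union_left (sparseSupport_combo a b z₁ z₂)
  have hcardq : (sparseSupport q ∪ S).card ≤ K + 1 := by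
    refine le_trans (Finset.card_le_card ?_) hcard
    exact Finset.union_subset_union_left (sparseSupport_combo (-a) b z₁ z₂)
  have hlow := (projRIP A S δ hδ1 hRIP hG p hpS hcardp).1
  have hup := (projRIP A S δ hδ1 hRIP hG q hqS hcardq).2
  -- linearity of z ↦ P (A z)
  have hlin : ∀ (c d : ℝ) (y₁ y₂ : Fin n → ℝ),
      projPerp A S *ᵥ (A *ᵥ (c • y₁ + d • y₂))
        = c • (projPerp A S *ᵥ (A *ᵥ y₁)) + d • (projPerp A S *ᵥ (A *ᵥ y₂)) := by
    intro c d y₁ y₂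
    rw [Matrix.mulVec_add, Matrix.mulVec_smul, Matrix.mulVec_smul, Matrix.mulVec_add,
      Matrix.mulVec_smul, Matrix.mulVec_smul]
  set B₁ := projPerp A S *ᵥ (A *ᵥ z₁) with hB₁
  set B₂ := projPerp A S *ᵥ (A *ᵥ z₂) with hB₂
  have hXnn := dot_self_nonneg B₁
  have hYnn := dot_self_nonneg B₂
  have hBp : projPerp A S *ᵥ (A *ᵥ p) = b • B₁ + a • B₂ := hlin b a z₁ z₂
  have hBq : projPerp A S *ᵥ (A *ᵥ q) = b • B₁ + (-a) • B₂ := hlin b (-a) z₁ z₂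
  rw [hBp, dot_expand, dot_expand] at hlow
  rw [hBq, dot_expand, dot_expand] at hup
  rw [← ha2, ← hb2] at hlow hup
  -- from hlow and hup derive the bound
  have hkey : 4 * (a * b) * (z₁ ⬝ᵥ z₂ - δ * a * b) ≤ 4 * (a * b) * (B₁ ⬝ᵥ B₂) := by
    nlinarith [hlow, hup, sq_nonneg (a*b)]
  have hab : 0 < 4 * (a * b) := by positivity
  have := le_of_mul_le_mul_left hkey hab
  linarith

set_option maxHeartbeats 1000000 in
/-- One step of OMP selects a correct index: for any `S ⊆ Ω` with `|S| < |Ω|`,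
the residual `r = P_S^⊥(Ax + v)` satisfies
`max_{i∈Ω∖S} |⟨r, A_i⟩| > max_{j∈Ω^c} |⟨r, A_j⟩|`. -/
theorem omp_selects_correct_index {m n K : ℕ} (hK : 1 ≤ K)
    (A : Matrix (Fin m) (Fin n) ℝ) (x : Fin n → ℝ) (v : Fin m → ℝ) (ε δ : ℝ)
    (hδ0 : 0 ≤ δ) (hδlt1 : δ < 1)
    (hδ : δ < 1 / Real.sqrt ((K : ℝ) + 1))
    (hRIP : RIP A (K + 1) δ)
    (hx : (sparseSupport x).card ≤ K)
    (hne : (sparseSupport x).Nonempty)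
    (hcne : ((sparseSupport x)ᶜ).Nonempty)
    (hv : l2norm v ≤ ε)
    (hmin : ∀ i ∈ sparseSupport x,
      2 * ε / (1 - Real.sqrt ((K : ℝ) + 1) * δ) < |x i|)
    (S : Finset (Fin n)) (hS : S ⊆ sparseSupport x)
    (hcard : S.card < (sparseSupport x).card) :
    supAbs ((sparseSupport x)ᶜ)
        (Aᵀ.mulVec ((projPerp A S).mulVec (A.mulVec x + v)))
      < supAbs (sparseSupport x \ S)
        (Aᵀ.mulVec ((projPerp A S).mulVec (A.mulVec x + v))) := by
  classical
  set sK1 := Real.sqrt ((K : ℝ) + 1) with hsK1def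
  set D := 1 - sK1 * δ with hDdef
  set μ := 2 * ε / D with hμdef
  set Ω := sparseSupport x with hΩdef
  set w := Aᵀ *ᵥ (projPerp A S *ᵥ (A *ᵥ x + v)) with hwdef
  set u := restrictVec x (Ω \ S) with hudef
  set l := (Ω \ S).card with hldef
  set N := Real.sqrt (u ⬝ᵥ u) with hNdef
  set sl := Real.sqrt (l : ℝ) with hsldef
  set sl1 := Real.sqrt ((l : ℝ) + 1) with hsl1def
  set sδ := Real.sqrt (1 + δ) with hsδdef
  have hmemΩ : ∀ i, i ∈ Ω ↔ x i ≠ 0 := fun i => by rw [hΩdef, mem_sparseSupport]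
  -- basic numeric facts
  have hε0 : 0 ≤ ε := by
    have h0 : (0:ℝ) ≤ l2norm v := Real.sqrt_nonneg _
    linarith
  have hsK1pos : 0 < sK1 := by rw [hsK1def]; exact Real.sqrt_pos.mpr (by positivity)
  have hDpos : 0 < D := by
    have hδ' : δ * sK1 < 1 := (lt_div_iff₀ hsK1pos).mp hδ
    rw [hDdef]; linarith
  have hμ0 : 0 ≤ μ := by rw [hμdef]; exact div_nonneg (by linarith) hDpos.le
  have hμD : μ * D = 2 * ε := by rw [hμdef]; exact div_mul_cancel₀ _ (ne_of_gt hDpos)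
  have hlpos : 0 < l := by rw [hldef, Finset.card_sdiff_of_subset hS]; omega
  have hΩ'ne : (Ω \ S).Nonempty := Finset.card_pos.mp (hldef ▸ hlpos)
  have hlK : l ≤ K := le_trans (hldef ▸ Finset.card_le_card Finset.sdiff_subset) hx
  have hl1R : (1:ℝ) ≤ (l:ℝ) := by exact_mod_cast hlpos
  have hlKR : (l:ℝ) ≤ (K:ℝ) := by exact_mod_cast hlK
  have hsl_ge1 : 1 ≤ sl := by
    have h := Real.sqrt_le_sqrt hl1R
    rwa [Real.sqrt_one, ← hsldef] at h
  have hslpos : 0 < sl := lt_of_lt_of_le one_pos hsl_ge1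
  have hsl2 : sl ^ 2 = (l:ℝ) := by rw [hsldef]; exact Real.sq_sqrt (Nat.cast_nonneg l)
  have hsl1nn : 0 ≤ sl1 := by rw [hsl1def]; exact Real.sqrt_nonneg _
  have hsl1_le : sl1 ≤ sK1 := by
    rw [hsl1def, hsK1def]; exact Real.sqrt_le_sqrt (by linarith)
  have hsl1_le2 : sl1 ≤ Real.sqrt 2 * sl := by
    have h := Real.sqrt_le_sqrt (show (l:ℝ) + 1 ≤ 2 * (l:ℝ) by linarith)
    rwa [Real.sqrt_mul (by norm_num : (0:ℝ) ≤ 2), ← hsldef, ← hsl1def] at h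
  have hsδ_le : sδ ≤ Real.sqrt 2 := by
    have h := Real.sqrt_le_sqrt (show 1 + δ ≤ 2 by linarith)
    rwa [← hsδdef] at h
  have h2sqrt : Real.sqrt 2 * Real.sqrt 2 = 2 := Real.mul_self_sqrt (by norm_num)
  have h41 : sδ * sl1 ≤ 2 * sl := by
    have hh := mul_le_mul hsδ_le hsl1_le2 hsl1nn (Real.sqrt_nonneg 2)
    rwa [← mul_assoc, h2sqrt] at hh
  -- Gram matrix invertibility
  have hG : IsUnit ((colSub A S)ᵀ * colSub A S).det :=
    gram_isUnit A S δ hδlt1 hRIP (by omega)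
  -- facts about u
  have huS : ∀ i ∈ S, u i = 0 := fun i hi => by
    rw [hudef]; exact if_neg (fun hmem => (Finset.mem_sdiff.mp hmem).2 hi)
  have hu_off : ∀ i, i ∉ Ω \ S → u i = 0 := fun i hi => by
    rw [hudef]; exact if_neg hi
  have hu_on : ∀ i ∈ Ω \ S, u i = x i := fun i hi => by
    rw [hudef]; exact if_pos hi
  have hxS0 : ∀ i, i ∉ S → restrictVec x S i = 0 := fun i hi => if_neg hi
  have hsplit : x = restrictVec x S + u := by
    funext i
    simp only [Pi.add_apply]
    by_cases hiS : i ∈ S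
    · rw [show restrictVec x S i = x i from if_pos hiS,
        huS i hiS, add_zero]
    · by_cases hiΩ : i ∈ Ω
      · rw [hxS0 i hiS, hu_on i (Finset.mem_sdiff.mpr ⟨hiΩ, hiS⟩), zero_add]
      · have hx0 : x i = 0 := by
          by_contra h
          exact hiΩ ((hmemΩ i).mpr h)
        rw [hxS0 i hiS, hu_off i (fun hmem => hiΩ (Finset.mem_sdiff.mp hmem).1), hx0, add_zero]
  have hudot : u ⬝ᵥ u = ∑ i ∈ Ω \ S, x i ^ 2 := by
    rw [← sumsq_eq_dot]
    rw [← Finset.sum_subset (Finset.subset_univ (Ω \ S))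
      (fun i _ hi => by rw [hu_off i hi]; ring)]
    exact Finset.sum_congr rfl fun i hi => by rw [hu_on i hi]
  have hN2 : N ^ 2 = u ⬝ᵥ u := by rw [hNdef]; exact Real.sq_sqrt (dot_self_nonneg u)
  -- lower bound on N
  have hpt : ∀ i ∈ Ω \ S, μ ^ 2 < x i ^ 2 := by
    intro i hi
    have h1 : μ < |x i| := hmin i (Finset.mem_sdiff.mp hi).1
    have h2 : μ ^ 2 < |x i| ^ 2 := by
      rw [sq, sq]; exact mul_self_lt_mul_self hμ0 h1
    rwa [sq_abs] at h2
  have hsum : (l:ℝ) * μ ^ 2 < ∑ i ∈ Ω \ S, x i ^ 2 := by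
    have h := Finset.sum_lt_sum_of_nonempty hΩ'ne hpt
    rwa [Finset.sum_const, nsmul_eq_mul, ← hldef] at h
  have hNlow : sl * μ < N := by
    have h := Real.sqrt_lt_sqrt (mul_nonneg (Nat.cast_nonneg l) (sq_nonneg μ)) (hudot ▸ hsum)
    rwa [Real.sqrt_mul (Nat.cast_nonneg l), Real.sqrt_sq hμ0, ← hsldef, ← hNdef] at h
  have hN0 : 0 < N := lt_of_le_of_lt (mul_nonneg hslpos.le hμ0) hNlow
  -- ℓ¹ bound
  have hX1 : ∑ i ∈ Ω \ S, |x i| ≤ sl * N := by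
    have hcs := Finset.sum_mul_sq_le_sq_mul_sq (Ω \ S) (fun _ => (1:ℝ)) (fun i => |x i|)
    simp only [one_mul, one_pow, sq_abs] at hcs
    rw [Finset.sum_const, nsmul_eq_mul, mul_one, ← hldef] at hcs
    have hX1nn : (0:ℝ) ≤ ∑ i ∈ Ω \ S, |x i| := Finset.sum_nonneg fun i _ => abs_nonneg _
    calc ∑ i ∈ Ω \ S, |x i| = Real.sqrt ((∑ i ∈ Ω \ S, |x i|) ^ 2) :=
          (Real.sqrt_sq hX1nn).symm
      _ ≤ Real.sqrt ((l:ℝ) * ∑ i ∈ Ω \ S, x i ^ 2) := Real.sqrt_le_sqrt hcs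
      _ = sl * N := by
          rw [Real.sqrt_mul (Nat.cast_nonneg l), ← hudot, ← hsldef, ← hNdef]
  -- the key dot product identity
  have hwz : ∀ z : Fin n → ℝ, w ⬝ᵥ z
      = (projPerp A S *ᵥ (A *ᵥ u)) ⬝ᵥ (projPerp A S *ᵥ (A *ᵥ z))
        + v ⬝ᵥ (projPerp A S *ᵥ (A *ᵥ z)) := by
    intro z
    have e1 : w ⬝ᵥ z = (projPerp A S *ᵥ (A *ᵥ x + v)) ⬝ᵥ (A *ᵥ z) := by
      rw [hwdef, Matrix.mulVec_transpose, ← Matrix.dotProduct_mulVec]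
    have e2 : projPerp A S *ᵥ (A *ᵥ x + v)
        = projPerp A S *ᵥ (A *ᵥ u) + projPerp A S *ᵥ v := by
      rw [Matrix.mulVec_add]
      congr 1
      conv_lhs => rw [hsplit]
      rw [Matrix.mulVec_add, Matrix.mulVec_add,
        projPerp_annihilate A S hG _ hxS0, zero_add]
    rw [e1, e2, add_dotProduct]
    congr 1
    · rw [projPerp_dot_swap, projPerp_dot_swap, projPerp_idem_vec A S hG]
    · exact projPerp_dot_swap A S v (A *ᵥ z)
  -- noise norm
  have hv' : Real.sqrt (v ⬝ᵥ v) ≤ ε := by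
    rw [← sumsq_eq_dot]; exact hv
  -- rewrite the goal
  rw [hΩdef] at hcne ⊢
  rw [← hΩdef] at hcne ⊢
  show supAbs Ωᶜ w < supAbs (Ω \ S) w
  unfold supAbs
  rw [← Finset.sup'_eq_csSup_image Ωᶜ hcne (fun i => |w i|),
    ← Finset.sup'_eq_csSup_image (Ω \ S) hΩ'ne (fun i => |w i|)]
  set α := (Ω \ S).sup' hΩ'ne (fun i => |w i|) with hαdef
  have hα0 : 0 ≤ α := by
    obtain ⟨i0, hi0⟩ := hΩ'ne
    exact le_trans (abs_nonneg (w i0)) (Finset.le_sup' (fun i => |w i|) hi0)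
  have hwle : ∀ i ∈ Ω \ S, |w i| ≤ α := by
    intro i hi
    rw [hαdef]
    exact Finset.le_sup' (fun j => |w j|) hi
  have hwu : w ⬝ᵥ u ≤ α * (sl * N) := by
    have h1 : w ⬝ᵥ u = ∑ i ∈ Ω \ S, w i * x i := by
      rw [show w ⬝ᵥ u = ∑ i, w i * u i from rfl]
      rw [← Finset.sum_subset (Finset.subset_univ (Ω \ S))
        (fun i _ hi => by rw [hu_off i hi, mul_zero])]
      exact Finset.sum_congr rfl fun i hi => by rw [hu_on i hi]
    rw [h1]
    calc ∑ i ∈ Ω \ S, w i * x i ≤ ∑ i ∈ Ω \ S, α * |x i| := by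
          apply Finset.sum_le_sum
          intro i hi
          calc w i * x i ≤ |w i * x i| := le_abs_self _
            _ = |w i| * |x i| := abs_mul _ _
            _ ≤ α * |x i| := mul_le_mul_of_nonneg_right (hwle i hi) (abs_nonneg _)
      _ = α * ∑ i ∈ Ω \ S, |x i| := (Finset.mul_sum _ _ _).symm
      _ ≤ α * (sl * N) := mul_le_mul_of_nonneg_left hX1 hα0
  rw [Finset.sup'_lt_iff]
  intro j₀ hj₀
  -- per-index argument
  have hj₀Ω : j₀ ∉ Ω := Finset.mem_compl.mp hj₀
  have hj₀S : j₀ ∉ S := fun h => hj₀Ω (hS h)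
  have hj₀ΩS : j₀ ∉ Ω \ S := fun h => hj₀Ω (Finset.mem_sdiff.mp h).1
  set σ := if 0 ≤ w j₀ then (1:ℝ) else -1 with hσdef
  have hσsq : σ ^ 2 = 1 := by rw [hσdef]; split_ifs <;> norm_num
  have hσ : σ * w j₀ = |w j₀| := by
    rw [hσdef]; split_ifs with h
    · rw [one_mul, abs_of_nonneg h]
    · rw [abs_of_neg (lt_of_not_ge h)]; ring
  set e : Fin n → ℝ := fun i => if i = j₀ then (1:ℝ) else 0 with hedef
  set z₂ := u - (sl * N * σ) • e with hz₂def
  have hwe : w ⬝ᵥ e = w j₀ := by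
    rw [hedef]; simp [dotProduct]
  have hue : u ⬝ᵥ e = 0 := by
    have h : u ⬝ᵥ e = u j₀ := by rw [hedef]; simp [dotProduct]
    rw [h, hu_off j₀ hj₀ΩS]
  have hee : e ⬝ᵥ e = 1 := by
    rw [hedef]; simp [dotProduct]
  have hz₂S : ∀ i ∈ S, z₂ i = 0 := by
    intro i hi
    rw [hz₂def]
    simp only [Pi.sub_apply, Pi.smul_apply, smul_eq_mul, hedef]
    rw [huS i hi, if_neg (fun h : i = j₀ => hj₀S (h ▸ hi))]
    ring
  have husupp : sparseSupport u ⊆ insert j₀ Ω := by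
    intro i hi
    rw [mem_sparseSupport] at hi
    apply Finset.mem_insert_of_mem
    by_contra hiΩ
    exact hi (hu_off i (fun hmem => hiΩ (Finset.mem_sdiff.mp hmem).1))
  have hz₂supp : sparseSupport z₂ ⊆ insert j₀ Ω := by
    intro i hi
    rw [mem_sparseSupport] at hi
    rw [Finset.mem_insert]
    by_cases h : i = j₀
    · exact Or.inl h
    · right
      by_contra hiΩ
      apply hi
      rw [hz₂def]
      simp only [Pi.sub_apply, Pi.smul_apply, smul_eq_mul, hedef, if_neg h, mul_zero, sub_zero]
      exact hu_off i (fun hmem => hiΩ (Finset.mem_sdiff.mp hmem).1)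
  have hScover : S ⊆ insert j₀ Ω := subset_trans hS (Finset.subset_insert _ _)
  have hinsK : (insert j₀ Ω).card ≤ K + 1 := by
    rw [Finset.card_insert_of_notMem hj₀Ω]; omega
  have hcardT : (sparseSupport u ∪ sparseSupport z₂ ∪ S).card ≤ K + 1 := by
    refine le_trans (Finset.card_le_card (Finset.union_subset
      (Finset.union_subset husupp hz₂supp) hScover)) hinsK
  have hcardz₂ : (sparseSupport z₂ ∪ S).card ≤ K + 1 :=
    le_trans (Finset.card_le_card (Finset.union_subset hz₂supp hScover)) hinsK
  -- z₂ inner products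
  have huz₂ : u ⬝ᵥ z₂ = u ⬝ᵥ u := by
    rw [hz₂def, dotProduct_sub, dotProduct_smul, smul_eq_mul, hue, mul_zero, sub_zero]
  have hz₂z₂ : z₂ ⬝ᵥ z₂ = ((l:ℝ) + 1) * N ^ 2 := by
    have hco : (1:ℝ) • u + (-(sl * N * σ)) • e = z₂ := by
      rw [one_smul, neg_smul, ← sub_eq_add_neg, hz₂def]
    rw [← hco, dot_expand, hue, hee]
    rw [← hN2]
    linear_combination (N ^ 2 * sl ^ 2) * hσsq + N ^ 2 * hσsq * 0 + N ^ 2 * hsl2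
  have hsqrtz₂ : Real.sqrt (z₂ ⬝ᵥ z₂) = sl1 * N := by
    rw [hz₂z₂, Real.sqrt_mul (by linarith), Real.sqrt_sq hN0.le, ← hsl1def]
  have hwz₂eq : w ⬝ᵥ z₂ = w ⬝ᵥ u - (sl * N) * |w j₀| := by
    rw [hz₂def, dotProduct_sub, dotProduct_smul, smul_eq_mul, hwe, mul_assoc, hσ]
  -- RIP bounds
  have hinner := projRIP_inner A S δ hδlt1.le hRIP hG u z₂ huS hz₂S hcardT
  rw [huz₂, ← hNdef, hsqrtz₂, ← hN2] at hinner
  have hupper := (projRIP A S δ hδlt1.le hRIP hG z₂ hz₂S hcardz₂).2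
  -- noise bound
  have hnoise : -(ε * (sδ * (sl1 * N))) ≤ v ⬝ᵥ (projPerp A S *ᵥ (A *ᵥ z₂)) := by
    have habs := abs_dot_le v (projPerp A S *ᵥ (A *ᵥ z₂))
    have hBz₂ : Real.sqrt ((projPerp A S *ᵥ (A *ᵥ z₂)) ⬝ᵥ (projPerp A S *ᵥ (A *ᵥ z₂)))
        ≤ sδ * (sl1 * N) := by
      have h2 := Real.sqrt_le_sqrt hupper
      rwa [Real.sqrt_mul (by linarith : (0:ℝ) ≤ 1 + δ), hsqrtz₂, ← hsδdef] at h2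
    have hfin : |v ⬝ᵥ (projPerp A S *ᵥ (A *ᵥ z₂))| ≤ ε * (sδ * (sl1 * N)) :=
      le_trans habs (mul_le_mul hv' hBz₂ (Real.sqrt_nonneg _) hε0)
    linarith [neg_abs_le (v ⬝ᵥ (projPerp A S *ᵥ (A *ᵥ z₂)))]
  -- combine
  have hcomb : N ^ 2 - δ * N * (sl1 * N) - ε * (sδ * (sl1 * N))
      ≤ α * (sl * N) - (sl * N) * |w j₀| := by
    have h1 := hwz z₂
    linarith [hinner, hnoise, hwu, hwz₂eq, h1]
  -- final numeric argument
  have hδsl1 : δ * sl1 ≤ sK1 * δ := by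
    have := mul_le_mul_of_nonneg_left hsl1_le hδ0
    linarith
  have hstep : 2 * ε * sl < N * (1 - δ * sl1) := by
    have s2 : sl * μ * D < N * D := mul_lt_mul_of_pos_right hNlow hDpos
    have s3 : sl * μ * D = sl * (2 * ε) := by rw [mul_assoc, hμD]
    have s1 : N * D ≤ N * (1 - δ * sl1) := by
      apply mul_le_mul_of_nonneg_left _ hN0.le
      rw [hDdef]
      linarith
    linarith
  have hgt : N * (2 * ε * sl) < N * (N * (1 - δ * sl1)) :=
    mul_lt_mul_of_pos_left hstep hN0
  have hs4 : ε * (sδ * (sl1 * N)) ≤ 2 * ε * (sl * N) := by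
    have hh := mul_le_mul_of_nonneg_right h41 (mul_nonneg hε0 hN0.le)
    linarith [hh]
  by_contra hcon
  push_neg at hcon
  have hbad : α * (sl * N) - (sl * N) * |w j₀| ≤ 0 := by
    linarith [mul_nonneg (mul_pos hslpos hN0).le (sub_nonneg.mpr hcon)]
  linarith [hcomb, hbad, hgt, hs4]
end

section
/- Let A ∈ ℝ^{m×n}, let K ≥ 1 be an integer, and suppose δ ∈ [0,1) satisfies the RIP of order K+1 for A with δ < 1/√(K+1). Let x ∈ ℝⁿ be K-sparse with nonempty support Ω = supp(x), and let S ⊊ Ω with |S| < |Ω|. Then ‖A_{Ω∖S}ᵀ P_S^⊥ A_{Ω∖S} x_{Ω∖S}‖_∞ − ‖A_{Ω^c}ᵀ P_S^⊥ A_{Ω∖S} x_{Ω∖S}‖_∞ ≥ (1 − √(K+1)·δ) · min_{i∈Ω}|x_i|. -/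
open Matrix Finset

namespace OMPAux

variable {m n : ℕ}

/-- Extension of a vector indexed by a `Finset` coerced to a subtype, by zero. -/
def extz (S : Finset (Fin n)) (z : {j // j ∈ S} → ℝ) : Fin n → ℝ :=
  fun i => if h : i ∈ S then z ⟨i, h⟩ else 0

lemma extz_eq_zero {S : Finset (Fin n)} {z : {j // j ∈ S} → ℝ} {i : Fin n} (hi : i ∉ S) :
    extz S z i = 0 := by simp [extz, hi]

lemma mulVec_extz (A : Matrix (Fin m) (Fin n) ℝ) (S : Finset (Fin n)) (z : {j // j ∈ S} → ℝ) :
    A.mulVec (extz S z) = (colSub A S).mulVec z := by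
  funext i
  simp only [mulVec, dotProduct, colSub]
  have h1 : ∑ j, A i j * extz S z j = ∑ j ∈ S, A i j * extz S z j :=
    (Finset.sum_subset (Finset.subset_univ S)
      (by intro j _ hj; simp [extz, hj])).symm
  rw [h1, ← Finset.sum_coe_sort S (fun j => A i j * extz S z j)]
  exact Finset.sum_congr rfl (fun j _ => by simp [extz, j.2])

lemma sum_sq_extz (S : Finset (Fin n)) (z : {j // j ∈ S} → ℝ) :
    ∑ i, (extz S z i) ^ 2 = ∑ j, (z j) ^ 2 := by
  have h1 : ∑ i, (extz S z i) ^ 2 = ∑ i ∈ S, (extz S z i) ^ 2 :=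
    (Finset.sum_subset (Finset.subset_univ S)
      (by intro j _ hj; simp [extz, hj])).symm
  rw [h1, ← Finset.sum_coe_sort S (fun j => (extz S z j) ^ 2)]
  exact Finset.sum_congr rfl (fun j _ => by simp [extz, j.2])

lemma dot_eq_sum_sq (v : Fin m → ℝ) : v ⬝ᵥ v = ∑ i, v i ^ 2 := by
  simp [dotProduct, sq]

lemma gram_isUnit_det (A : Matrix (Fin m) (Fin n) ℝ) (S : Finset (Fin n)) (K : ℕ) (δ : ℝ)
    (hδlt1 : δ < 1) (hRIP : RIP A (K + 1) δ) (hScard : S.card ≤ K + 1) :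
    IsUnit ((colSub A S)ᵀ * colSub A S).det := by
  have hpd : ((colSub A S)ᵀ * colSub A S).PosDef := by
    refine Matrix.PosDef.of_dotProduct_mulVec_pos
      (by simpa using Matrix.isHermitian_conjTranspose_mul_self (colSub A S)) fun v hv => ?_
    have h1 : star v ⬝ᵥ (((colSub A S)ᵀ * colSub A S) *ᵥ v)
        = (colSub A S *ᵥ v) ⬝ᵥ (colSub A S *ᵥ v) := by
      rw [star_trivial, ← mulVec_mulVec, dotProduct_mulVec, vecMul_transpose]
    rw [h1, dot_eq_sum_sq, ← mulVec_extz]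
    have hsupp : (sparseSupport (extz S v)).card ≤ K + 1 := by
      refine le_trans (Finset.card_le_card ?_) hScard
      intro i hi
      simp only [sparseSupport, Finset.mem_filter] at hi
      by_contra h
      exact hi.2 (extz_eq_zero h)
    have hlow := (hRIP (extz S v) hsupp).1
    rw [sum_sq_extz] at hlow
    have hvpos : 0 < ∑ j, v j ^ 2 := by
      obtain ⟨j, hj⟩ := Function.ne_iff.mp hv
      exact Finset.sum_pos' (fun _ _ => sq_nonneg _)
        ⟨j, Finset.mem_univ _, (sq_nonneg _).lt_of_ne (Ne.symm (pow_ne_zero 2 hj))⟩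
    calc (0:ℝ) < (1 - δ) * ∑ j, v j ^ 2 := by nlinarith
    _ ≤ _ := hlow
  exact (Matrix.isUnit_iff_isUnit_det _).mp hpd.isUnit

section Proj

variable {A : Matrix (Fin m) (Fin n) ℝ} {S : Finset (Fin n)}

lemma projPerp_transpose : (projPerp A S)ᵀ = projPerp A S := by
  have hG : ((colSub A S)ᵀ * colSub A S)ᵀ = (colSub A S)ᵀ * colSub A S := by
    rw [Matrix.transpose_mul, Matrix.transpose_transpose]
  simp [projPerp, Matrix.transpose_sub, Matrix.transpose_mul, Matrix.transpose_nonsing_inv,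
    hG, Matrix.mul_assoc]

lemma colSubT_mul_projPerp (hdet : IsUnit ((colSub A S)ᵀ * colSub A S).det) : (colSub A S)ᵀ * projPerp A S = 0 := by
  rw [projPerp, Matrix.mul_sub, Matrix.mul_one, ← Matrix.mul_assoc, ← Matrix.mul_assoc,
    Matrix.mul_nonsing_inv _ hdet, Matrix.one_mul, sub_self]

lemma projPerp_idem (hdet : IsUnit ((colSub A S)ᵀ * colSub A S).det) : projPerp A S * projPerp A S = projPerp A S := by
  nth_rewrite 1 [projPerp]
  rw [Matrix.sub_mul, Matrix.one_mul, Matrix.mul_assoc, colSubT_mul_projPerp hdet,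
    Matrix.mul_zero, sub_zero]

lemma proj_dot {M : Matrix (Fin m) (Fin m) ℝ} (hsym : Mᵀ = M) (hidem : M * M = M)
    (u y : Fin m → ℝ) : (M *ᵥ u) ⬝ᵥ (M *ᵥ y) = u ⬝ᵥ (M *ᵥ y) := by
  have h1 : M *ᵥ u = u ᵥ* M := by nth_rewrite 1 [← hsym]; rw [mulVec_transpose]
  rw [h1, ← dotProduct_mulVec, mulVec_mulVec, hidem]

lemma projPerp_dot (hdet : IsUnit ((colSub A S)ᵀ * colSub A S).det) (u y : Fin m → ℝ) :
    (projPerp A S *ᵥ u) ⬝ᵥ (projPerp A S *ᵥ y) = u ⬝ᵥ (projPerp A S *ᵥ y) :=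
  proj_dot projPerp_transpose (projPerp_idem hdet) u y

lemma projPerp_mulVec (y : Fin m → ℝ) :
    projPerp A S *ᵥ y
      = y - A *ᵥ extz S ((((colSub A S)ᵀ * colSub A S)⁻¹ * (colSub A S)ᵀ) *ᵥ y) := by
  rw [mulVec_extz, projPerp, Matrix.sub_mulVec, Matrix.one_mulVec, mulVec_mulVec,
    Matrix.mul_assoc]


lemma sparseSupport_sub_subset (a b : Fin n → ℝ) :
    sparseSupport (a - b) ⊆ sparseSupport a ∪ sparseSupport b := by
  intro i hi
  simp only [sparseSupport, Finset.mem_filter, Finset.mem_union, Finset.mem_univ, true_and,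
    Pi.sub_apply] at *
  by_contra h
  push_neg at h
  rw [h.1, h.2, sub_zero] at hi
  exact hi rfl

lemma sparseSupport_add_subset (a b : Fin n → ℝ) :
    sparseSupport (a + b) ⊆ sparseSupport a ∪ sparseSupport b := by
  intro i hi
  simp only [sparseSupport, Finset.mem_filter, Finset.mem_union, Finset.mem_univ, true_and,
    Pi.add_apply] at *
  by_contra h
  push_neg at h
  rw [h.1, h.2, add_zero] at hi
  exact hi rfl

lemma sparseSupport_smul_subset (c : ℝ) (a : Fin n → ℝ) :
    sparseSupport (c • a) ⊆ sparseSupport a := by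
  intro i hi
  simp only [sparseSupport, Finset.mem_filter, Finset.mem_univ, true_and, Pi.smul_apply,
    smul_eq_mul] at *
  exact fun h => hi (by rw [h, mul_zero])

variable {K : ℕ} {δ : ℝ}

/-- RIP-type bounds for the projected matrix `P_S^⊥ A`. -/
lemma ripB (hδlt1 : δ < 1) (hRIP : RIP A (K + 1) δ)
    (hdet : IsUnit ((colSub A S)ᵀ * colSub A S).det)
    (z : Fin n → ℝ) (W : Finset (Fin n)) (hzW : sparseSupport z ⊆ W)
    (hWS : Disjoint W S) (hWcard : W.card + S.card ≤ K + 1) :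
    (1 - δ) * (∑ i, z i ^ 2) ≤ ∑ i, (projPerp A S *ᵥ (A *ᵥ z)) i ^ 2 ∧
    ∑ i, (projPerp A S *ᵥ (A *ᵥ z)) i ^ 2 ≤ (1 + δ) * (∑ i, z i ^ 2) := by
  constructor
  · -- lower bound
    set q : Fin n → ℝ :=
      extz S ((((colSub A S)ᵀ * colSub A S)⁻¹ * (colSub A S)ᵀ) *ᵥ (A *ᵥ z)) with hq
    have hBz : projPerp A S *ᵥ (A *ᵥ z) = A *ᵥ (z - q) := by
      rw [Matrix.mulVec_sub, projPerp_mulVec]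
    have hqS : ∀ i, i ∉ S → q i = 0 := fun i hi => extz_eq_zero hi
    have hsupp : (sparseSupport (z - q)).card ≤ K + 1 := by
      have h1 : sparseSupport (z - q) ⊆ W ∪ S := by
        refine le_trans (sparseSupport_sub_subset z q) ?_
        apply Finset.union_subset_union hzW
        intro i hi
        simp only [sparseSupport, Finset.mem_filter] at hi
        by_contra h
        exact hi.2 (hqS i h)
      calc (sparseSupport (z - q)).card ≤ (W ∪ S).card := Finset.card_le_card h1
      _ ≤ W.card + S.card := Finset.card_union_le _ _
      _ ≤ K + 1 := hWcard
    have hzq : ∑ i, z i * q i = 0 := by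
      apply Finset.sum_eq_zero
      intro i _
      by_cases h : z i = 0
      · rw [h, zero_mul]
      · have hiW : i ∈ W := hzW (by simp [sparseSupport, h])
        have hiS : i ∉ S := Finset.disjoint_left.mp hWS hiW
        rw [hqS i hiS, mul_zero]
    have hsum : ∑ i, (z i - q i) ^ 2 = ∑ i, z i ^ 2 + ∑ i, q i ^ 2 := by
      calc ∑ i, (z i - q i) ^ 2
          = ∑ i, (z i ^ 2 + q i ^ 2 - 2 * (z i * q i)) :=
            Finset.sum_congr rfl (fun i _ => by ring)
        _ = ∑ i, (z i ^ 2 + q i ^ 2) - 2 * ∑ i, (z i * q i) := by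
            rw [Finset.sum_sub_distrib, Finset.mul_sum]
        _ = ∑ i, z i ^ 2 + ∑ i, q i ^ 2 := by rw [Finset.sum_add_distrib, hzq]; ring
    have hlow := (hRIP (z - q) hsupp).1
    have hzz : ∀ i, (z - q) i = z i - q i := fun i => rfl
    have hsum2 : ∑ i, (z - q) i ^ 2 = ∑ i, z i ^ 2 + ∑ i, q i ^ 2 := by
      simp only [hzz]; exact hsum
    rw [hBz]
    calc (1 - δ) * ∑ i, z i ^ 2
        ≤ (1 - δ) * (∑ i, z i ^ 2 + ∑ i, q i ^ 2) := by
          have : (0:ℝ) ≤ ∑ i, q i ^ 2 := Finset.sum_nonneg (fun i _ => sq_nonneg _)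
          nlinarith
      _ = (1 - δ) * ∑ i, (z - q) i ^ 2 := by rw [hsum2]
      _ ≤ ∑ i, (A *ᵥ (z - q)) i ^ 2 := hlow
  · -- upper bound
    set y : Fin m → ℝ := A *ᵥ z with hy
    set P : Matrix (Fin m) (Fin m) ℝ := 1 - projPerp A S with hP
    have hPsym : Pᵀ = P := by
      rw [hP, Matrix.transpose_sub, Matrix.transpose_one, projPerp_transpose]
    have hPidem : P * P = P := by
      rw [hP, Matrix.sub_mul, Matrix.mul_sub, Matrix.mul_sub, Matrix.one_mul, Matrix.mul_one,
        projPerp_idem hdet, Matrix.one_mul]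
      abel
    have h1 : ∑ i, (projPerp A S *ᵥ y) i ^ 2 = y ⬝ᵥ (projPerp A S *ᵥ y) := by
      rw [← dot_eq_sum_sq, projPerp_dot hdet]
    have h2 : ∑ i, (P *ᵥ y) i ^ 2 = y ⬝ᵥ (P *ᵥ y) := by
      rw [← dot_eq_sum_sq, proj_dot hPsym hPidem]
    have h3 : y ⬝ᵥ (projPerp A S *ᵥ y) + y ⬝ᵥ (P *ᵥ y) = ∑ i, y i ^ 2 := by
      rw [← dotProduct_add]
      have : projPerp A S *ᵥ y + P *ᵥ y = y := by
        rw [hP, Matrix.sub_mulVec, Matrix.one_mulVec]; abel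
      rw [this, dot_eq_sum_sq]
    have h4 : (0:ℝ) ≤ ∑ i, (P *ᵥ y) i ^ 2 := Finset.sum_nonneg (fun i _ => sq_nonneg _)
    have hsuppz : (sparseSupport z).card ≤ K + 1 := by
      calc (sparseSupport z).card ≤ W.card := Finset.card_le_card hzW
        _ ≤ K + 1 := by omega
    have hup := (hRIP z hsuppz).2
    calc ∑ i, (projPerp A S *ᵥ y) i ^ 2 ≤ ∑ i, y i ^ 2 := by
          rw [h1]; rw [h2] at h4; linarith
      _ ≤ (1 + δ) * ∑ i, z i ^ 2 := hup


/-- Inner-product RIP bound for the projected matrix. -/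
lemma ripB_inner (hδ0 : 0 ≤ δ) (hδlt1 : δ < 1) (hRIP : RIP A (K + 1) δ)
    (hdet : IsUnit ((colSub A S)ᵀ * colSub A S).det)
    (a b : Fin n → ℝ) (W : Finset (Fin n))
    (haW : sparseSupport a ⊆ W) (hbW : sparseSupport b ⊆ W)
    (hWS : Disjoint W S) (hWcard : W.card + S.card ≤ K + 1)
    (ha : 0 < ∑ i, a i ^ 2) (hb : 0 < ∑ i, b i ^ 2) :
    a ⬝ᵥ b - δ * Real.sqrt (∑ i, a i ^ 2) * Real.sqrt (∑ i, b i ^ 2)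
      ≤ (projPerp A S *ᵥ (A *ᵥ a)) ⬝ᵥ (projPerp A S *ᵥ (A *ᵥ b)) := by
  set sa : ℝ := Real.sqrt (∑ i, a i ^ 2) with hsa
  set sb : ℝ := Real.sqrt (∑ i, b i ^ 2) with hsb
  have hsa0 : 0 < sa := Real.sqrt_pos.mpr ha
  have hsb0 : 0 < sb := Real.sqrt_pos.mpr hb
  have hsa2 : sa ^ 2 = ∑ i, a i ^ 2 := Real.sq_sqrt ha.le
  have hsb2 : sb ^ 2 = ∑ i, b i ^ 2 := Real.sq_sqrt hb.le
  set a0 : Fin n → ℝ := sa⁻¹ • a with ha0def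
  set b0 : Fin n → ℝ := sb⁻¹ • b with hb0def
  have ha0i : ∀ i, a0 i = sa⁻¹ * a i := fun i => rfl
  have hb0i : ∀ i, b0 i = sb⁻¹ * b i := fun i => rfl
  have ha0sq : ∑ i, a0 i ^ 2 = 1 := by
    calc ∑ i, a0 i ^ 2 = sa⁻¹ ^ 2 * ∑ i, a i ^ 2 := by
          rw [Finset.mul_sum]; exact Finset.sum_congr rfl (fun i _ => by rw [ha0i]; ring)
      _ = 1 := by rw [← hsa2]; field_simp
  have hb0sq : ∑ i, b0 i ^ 2 = 1 := by
    calc ∑ i, b0 i ^ 2 = sb⁻¹ ^ 2 * ∑ i, b i ^ 2 := by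
          rw [Finset.mul_sum]; exact Finset.sum_congr rfl (fun i _ => by rw [hb0i]; ring)
      _ = 1 := by rw [← hsb2]; field_simp
  have ha0W : sparseSupport a0 ⊆ W := le_trans (sparseSupport_smul_subset _ _) haW
  have hb0W : sparseSupport b0 ⊆ W := le_trans (sparseSupport_smul_subset _ _) hbW
  -- RIP for the sum and difference
  have hplusW : sparseSupport (a0 + b0) ⊆ W := by
    refine le_trans (sparseSupport_add_subset _ _) ?_
    exact Finset.union_subset ha0W hb0W
  have hsubW : sparseSupport (a0 - b0) ⊆ W := by
    refine le_trans (sparseSupport_sub_subset _ _) ?_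
    exact Finset.union_subset ha0W hb0W
  have hlow := (ripB hδlt1 hRIP hdet (a0 + b0) W hplusW hWS hWcard).1
  have hup := (ripB hδlt1 hRIP hdet (a0 - b0) W hsubW hWS hWcard).2
  set Ba : Fin m → ℝ := projPerp A S *ᵥ (A *ᵥ a0) with hBa
  set Bb : Fin m → ℝ := projPerp A S *ᵥ (A *ᵥ b0) with hBb
  have hBplus : projPerp A S *ᵥ (A *ᵥ (a0 + b0)) = Ba + Bb := by
    rw [Matrix.mulVec_add, Matrix.mulVec_add]
  have hBsub : projPerp A S *ᵥ (A *ᵥ (a0 - b0)) = Ba - Bb := by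
    rw [Matrix.mulVec_sub, Matrix.mulVec_sub]
  rw [hBplus] at hlow
  rw [hBsub] at hup
  set t : ℝ := a0 ⬝ᵥ b0 with ht
  have hsplus : ∑ i, (a0 + b0) i ^ 2 = 2 + 2 * t := by
    calc ∑ i, (a0 + b0) i ^ 2
        = ∑ i, (a0 i ^ 2 + b0 i ^ 2 + 2 * (a0 i * b0 i)) :=
          Finset.sum_congr rfl (fun i _ => by simp [Pi.add_apply]; ring)
      _ = ∑ i, (a0 i ^ 2 + b0 i ^ 2) + 2 * ∑ i, a0 i * b0 i := by
          rw [Finset.sum_add_distrib, Finset.mul_sum]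
      _ = 2 + 2 * t := by
          have htd : t = ∑ i, a0 i * b0 i := rfl
          rw [Finset.sum_add_distrib, ha0sq, hb0sq, htd]; ring
  have hssub : ∑ i, (a0 - b0) i ^ 2 = 2 - 2 * t := by
    calc ∑ i, (a0 - b0) i ^ 2
        = ∑ i, (a0 i ^ 2 + b0 i ^ 2 - 2 * (a0 i * b0 i)) :=
          Finset.sum_congr rfl (fun i _ => by simp [Pi.sub_apply]; ring)
      _ = ∑ i, (a0 i ^ 2 + b0 i ^ 2) - 2 * ∑ i, a0 i * b0 i := by
          rw [Finset.sum_sub_distrib, Finset.mul_sum]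
      _ = 2 - 2 * t := by
          have htd : t = ∑ i, a0 i * b0 i := rfl
          rw [Finset.sum_add_distrib, ha0sq, hb0sq, htd]; ring
  have hpol : ∑ i, (Ba + Bb) i ^ 2 - ∑ i, (Ba - Bb) i ^ 2 = 4 * (Ba ⬝ᵥ Bb) := by
    rw [← Finset.sum_sub_distrib]
    calc ∑ i, ((Ba + Bb) i ^ 2 - (Ba - Bb) i ^ 2)
        = ∑ i, 4 * (Ba i * Bb i) :=
          Finset.sum_congr rfl (fun i _ => by simp [Pi.add_apply, Pi.sub_apply]; ring)
      _ = 4 * (Ba ⬝ᵥ Bb) := by rw [← Finset.mul_sum]; rfl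
  have hkey : t - δ ≤ Ba ⬝ᵥ Bb := by
    rw [hsplus] at hlow
    rw [hssub] at hup
    nlinarith [hpol, hlow, hup]
  -- rescale
  have hBa' : Ba = sa⁻¹ • (projPerp A S *ᵥ (A *ᵥ a)) := by
    rw [hBa, ha0def, Matrix.mulVec_smul, Matrix.mulVec_smul]
  have hBb' : Bb = sb⁻¹ • (projPerp A S *ᵥ (A *ᵥ b)) := by
    rw [hBb, hb0def, Matrix.mulVec_smul, Matrix.mulVec_smul]
  have hBab : (projPerp A S *ᵥ (A *ᵥ a)) ⬝ᵥ (projPerp A S *ᵥ (A *ᵥ b))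
      = sa * sb * (Ba ⬝ᵥ Bb) := by
    rw [hBa', hBb', smul_dotProduct, dotProduct_smul, smul_eq_mul, smul_eq_mul]
    field_simp
  have hab : a ⬝ᵥ b = sa * sb * t := by
    have ht' : t = sa⁻¹ * (sb⁻¹ * (a ⬝ᵥ b)) := by
      rw [ht, ha0def, hb0def, smul_dotProduct, dotProduct_smul, smul_eq_mul, smul_eq_mul]
    rw [ht']; field_simp
  rw [hBab, hab]
  have := mul_le_mul_of_nonneg_left hkey (by positivity : (0:ℝ) ≤ sa * sb)
  nlinarith [this]

end Proj

end OMPAux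
set_option maxHeartbeats 2000000 in
/-- For `S ⊊ Ω = supp(x)` and `δ < 1/√(K+1)`:
`‖A_{Ω∖S}ᵀ P_S^⊥ A_{Ω∖S} x_{Ω∖S}‖_∞ − ‖A_{Ω^c}ᵀ P_S^⊥ A_{Ω∖S} x_{Ω∖S}‖_∞
  ≥ (1 − √(K+1)·δ) · min_{i∈Ω}|x_i|`. -/
theorem omp_lemma_min_bound {m n : ℕ} (A : Matrix (Fin m) (Fin n) ℝ) (K : ℕ) (hK : 1 ≤ K)
    (δ : ℝ) (hδ0 : 0 ≤ δ) (hδlt1 : δ < 1)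
    (hδ : δ < 1 / Real.sqrt ((K : ℝ) + 1))
    (hRIP : RIP A (K + 1) δ)
    (x : Fin n → ℝ) (hx : (sparseSupport x).card ≤ K)
    (hne : (sparseSupport x).Nonempty)
    (S : Finset (Fin n)) (hS : S ⊆ sparseSupport x)
    (hcard : S.card < (sparseSupport x).card) :
    supAbs (sparseSupport x \ S)
        (Aᵀ.mulVec ((projPerp A S).mulVec (A.mulVec (restrictVec x (sparseSupport x \ S)))))
      - supAbs ((sparseSupport x)ᶜ)
        (Aᵀ.mulVec ((projPerp A S).mulVec (A.mulVec (restrictVec x (sparseSupport x \ S)))))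
      ≥ (1 - Real.sqrt ((K : ℝ) + 1) * δ)
          * (sparseSupport x).inf' hne (fun i => |x i|) := by
  classical
  set Ω := sparseSupport x with hΩ
  set T := Ω \ S with hTdef
  set xT := restrictVec x T with hxTdef
  set u := (projPerp A S).mulVec (A.mulVec xT) with hudef
  set w := Aᵀ.mulVec u with hwdef
  set μ := Ω.inf' hne (fun i => |x i|) with hμdef
  -- basic cardinality facts
  have hdet := OMPAux.gram_isUnit_det A S K δ hδlt1 hRIP
    (le_trans (le_of_lt hcard) (le_trans hx (Nat.le_succ K)))
  have hTsub : T ⊆ Ω := Finset.sdiff_subset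
  have hTS : Disjoint T S := Finset.sdiff_disjoint
  have hTcard : T.card + S.card = Ω.card := by
    have h1 := Finset.card_sdiff_of_subset hS
    have h2 := Finset.card_le_card hS
    rw [hTdef]
    omega
  have hTne : T.Nonempty := by
    rw [← Finset.card_pos]
    omega
  have hxmem : ∀ i ∈ Ω, x i ≠ 0 := by
    intro i hi
    rw [hΩ] at hi
    exact (Finset.mem_filter.mp hi).2
  have hxTi : ∀ i, xT i = if i ∈ T then x i else 0 := fun i => rfl
  have hxTsupp : sparseSupport xT ⊆ T := by
    intro i hi
    simp only [sparseSupport, Finset.mem_filter, Finset.mem_univ, true_and] at hi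
    by_contra h
    exact hi (by rw [hxTi i, if_neg h])
  have hμpos : 0 < μ := by
    rw [hμdef, Finset.lt_inf'_iff]
    exact fun i hi => abs_pos.mpr (hxmem i hi)
  have hμle : ∀ i ∈ Ω, μ ≤ |x i| := fun i hi => Finset.inf'_le _ hi
  set c := ∑ i ∈ T, |x i| with hcdef
  have hc0 : 0 < c :=
    Finset.sum_pos (fun i hi => abs_pos.mpr (hxmem i (hTsub hi))) hTne
  set h2 := ∑ i, xT i ^ 2 with hh2
  have h2T : h2 = ∑ i ∈ T, x i ^ 2 := by
    rw [hh2, ← Finset.sum_subset (Finset.subset_univ T)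
      (fun i _ hi => by rw [hxTi i, if_neg hi]; ring)]
    exact Finset.sum_congr rfl (fun i hi => by rw [hxTi i, if_pos hi])
  have h2pos : 0 < h2 := by
    rw [h2T]
    exact Finset.sum_pos
      (fun i hi => (sq_nonneg _).lt_of_ne
        (Ne.symm (pow_ne_zero 2 (hxmem i (hTsub hi))))) hTne
  have hμc : μ * c ≤ h2 := by
    rw [h2T, hcdef, Finset.mul_sum]
    apply Finset.sum_le_sum
    intro i hi
    have h1 := hμle i (hTsub hi)
    calc μ * |x i| ≤ |x i| * |x i| := mul_le_mul_of_nonneg_right h1 (abs_nonneg _)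
      _ = x i ^ 2 := by rw [abs_mul_abs_self]; ring
  have hcK : c ^ 2 ≤ (K : ℝ) * h2 := by
    have h1 : (∑ i ∈ T, |x i|) ^ 2 ≤ (T.card : ℝ) * ∑ i ∈ T, |x i| ^ 2 :=
      sq_sum_le_card_mul_sum_sq
    have h2' : ∑ i ∈ T, |x i| ^ 2 = ∑ i ∈ T, x i ^ 2 :=
      Finset.sum_congr rfl (fun i _ => sq_abs _)
    have h3 : (T.card : ℝ) ≤ (K : ℝ) := by
      exact_mod_cast le_trans (Finset.card_le_card hTsub) hx
    have h4 : (0:ℝ) ≤ ∑ i ∈ T, x i ^ 2 := Finset.sum_nonneg (fun i _ => sq_nonneg _)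
    rw [hcdef, h2T]
    nlinarith
  -- sup bound on T
  have hαb : ∀ i ∈ T, |w i| ≤ supAbs T w := by
    intro i hi
    exact le_csSup ((T.finite_toSet.image _).bddAbove) ⟨i, Finset.mem_coe.mpr hi, rfl⟩
  have hsum_xw : ∑ i, xT i * w i ≤ c * supAbs T w := by
    have h1 : ∑ i, xT i * w i = ∑ i ∈ T, x i * w i := by
      rw [← Finset.sum_subset (Finset.subset_univ T)
        (fun i _ hi => by rw [hxTi i, if_neg hi, zero_mul])]
      exact Finset.sum_congr rfl (fun i hi => by rw [hxTi i, if_pos hi])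
    rw [h1, hcdef, Finset.sum_mul]
    apply Finset.sum_le_sum
    intro i hi
    calc x i * w i ≤ |x i * w i| := le_abs_self _
      _ = |x i| * |w i| := abs_mul _ _
      _ ≤ |x i| * supAbs T w := mul_le_mul_of_nonneg_left (hαb i hi) (abs_nonneg _)
  -- dot product identities
  have hdg : ∀ v : Fin n → ℝ, v ⬝ᵥ w = (A *ᵥ v) ⬝ᵥ u := by
    intro v
    rw [hwdef, dotProduct_mulVec, vecMul_transpose]
  have hdot1 : ∑ i, xT i * w i = (A *ᵥ xT) ⬝ᵥ u := by
    rw [← hdg xT]; rfl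
  have hsq1 : (1:ℝ) ≤ Real.sqrt ((K : ℝ) + 1) := by
    rw [show (1:ℝ) = Real.sqrt 1 by rw [Real.sqrt_one]]
    exact Real.sqrt_le_sqrt (by norm_num)
  have hsqpos : 0 < Real.sqrt ((K : ℝ) + 1) := lt_of_lt_of_le one_pos hsq1
  have hqlt : Real.sqrt ((K : ℝ) + 1) * δ < 1 := by
    have := (lt_div_iff₀ hsqpos).mp hδ
    linarith [this]
  have hqnn : 0 ≤ 1 - Real.sqrt ((K : ℝ) + 1) * δ := by linarith
  by_cases hOc : (Ωᶜ : Finset (Fin n)) = ∅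
  · -- no coordinates outside the support
    have hβ : supAbs Ωᶜ w = 0 := by
      rw [supAbs, hOc]
      simp [Real.sSup_empty]
    have hWcard : T.card + S.card ≤ K + 1 := by omega
    have hrip' : (1 - δ) * h2 ≤ ∑ i, u i ^ 2 := by
      rw [hudef, hh2]
      exact (OMPAux.ripB hδlt1 hRIP hdet xT T hxTsupp hTS hWcard).1
    have hsum_eq : ∑ i, xT i * w i = ∑ i, u i ^ 2 := by
      rw [hdot1, ← OMPAux.dot_eq_sum_sq, hudef]
      exact (OMPAux.projPerp_dot hdet _ _).symm
    rw [hβ, sub_zero, ge_iff_le, ← mul_le_mul_iff_of_pos_right hc0]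
    have e0 : (1 - δ) * h2 ≤ c * supAbs T w := by linarith
    have e1 : (1 - δ) * (μ * c) ≤ (1 - δ) * h2 :=
      mul_le_mul_of_nonneg_left hμc (by linarith)
    have e2 : (1 - Real.sqrt ((K : ℝ) + 1) * δ) * (μ * c) ≤ (1 - δ) * (μ * c) := by
      have hμc0 : 0 ≤ μ * c := le_of_lt (mul_pos hμpos hc0)
      have hd : δ ≤ Real.sqrt ((K : ℝ) + 1) * δ := by nlinarith
      nlinarith [hd, hμc0]
    nlinarith [e0, e1, e2]
  · -- there is a coordinate outside the support
    have hOcne : (Ωᶜ : Finset (Fin n)).Nonempty := Finset.nonempty_iff_ne_empty.mpr hOc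
    obtain ⟨j0, hj0⟩ := hOcne
    have hfin : ((fun i => |w i|) '' ↑(Ωᶜ : Finset (Fin n))).Finite :=
      ((Ωᶜ : Finset (Fin n)).finite_toSet).image _
    have hnes : ((fun i => |w i|) '' ↑(Ωᶜ : Finset (Fin n))).Nonempty :=
      ⟨|w j0|, ⟨j0, Finset.mem_coe.mpr hj0, rfl⟩⟩
    obtain ⟨j, hjmem, hjeq⟩ :
        ∃ j, j ∈ (Ωᶜ : Finset (Fin n)) ∧ |w j| = supAbs Ωᶜ w := by
      obtain ⟨j, hj, hjw⟩ := hnes.csSup_mem hfin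
      exact ⟨j, Finset.mem_coe.mp hj, hjw⟩
    have hjΩ : j ∉ Ω := Finset.mem_compl.mp hjmem
    have hjT : j ∉ T := fun h => hjΩ (hTsub h)
    have hjS : j ∉ S := fun h => hjΩ (hS h)
    set s : ℝ := if 0 ≤ w j then 1 else -1 with hsdef
    have hsw : s * w j = |w j| := by
      rw [hsdef]
      split_ifs with h
      · rw [one_mul, abs_of_nonneg h]
      · rw [abs_of_neg (lt_of_not_ge h)]; ring
    have hs2 : s ^ 2 = 1 := by
      rw [hsdef]; split_ifs <;> norm_num
    set b' : Fin n → ℝ := xT - (c * s) • (Pi.single j 1 : Fin n → ℝ) with hb'def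
    have hb'i : ∀ i, b' i = xT i - (c * s) * (Pi.single j 1 : Fin n → ℝ) i := fun i => rfl
    have hb'supp : sparseSupport b' ⊆ insert j T := by
      intro i hi
      simp only [sparseSupport, Finset.mem_filter, Finset.mem_univ, true_and] at hi
      by_contra h
      simp only [Finset.mem_insert, not_or] at h
      apply hi
      rw [hb'i i, hxTi i, if_neg h.2, Pi.single_eq_of_ne h.1, mul_zero, sub_zero]
    have hsingle_xT : ∑ i, xT i * (Pi.single j 1 : Fin n → ℝ) i = 0 := by
      apply Finset.sum_eq_zero
      intro i _
      by_cases h : i = j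
      · subst h; rw [hxTi i, if_neg hjT, zero_mul]
      · rw [Pi.single_eq_of_ne h, mul_zero]
    have hsingle_sq : ∑ i, ((Pi.single j 1 : Fin n → ℝ) i) ^ 2 = 1 := by
      have hterm : ∀ i ∈ Finset.univ, ((Pi.single j 1 : Fin n → ℝ) i) ^ 2
          = if i = j then (1:ℝ) else 0 := by
        intro i _
        by_cases h : i = j
        · subst h; simp
        · rw [Pi.single_eq_of_ne h, if_neg h]; ring
      rw [Finset.sum_congr rfl hterm, Finset.sum_ite_eq' Finset.univ j (fun _ => (1:ℝ))]
      simp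
    have hb'sq : ∑ i, b' i ^ 2 = h2 + c ^ 2 := by
      have hterm : ∀ i ∈ Finset.univ, b' i ^ 2
          = xT i ^ 2 - 2 * (c * s) * (xT i * (Pi.single j 1 : Fin n → ℝ) i)
            + (c * s) ^ 2 * ((Pi.single j 1 : Fin n → ℝ) i) ^ 2 := fun i _ => by rw [hb'i i]; ring
      rw [Finset.sum_congr rfl hterm, Finset.sum_add_distrib, Finset.sum_sub_distrib,
        ← Finset.mul_sum, ← Finset.mul_sum, hsingle_xT, hsingle_sq, mul_zero, sub_zero,
        mul_one, mul_pow, hs2, mul_one]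
    have hb'pos : 0 < ∑ i, b' i ^ 2 := by
      rw [hb'sq]; positivity
    have hb'dotxT : b' ⬝ᵥ xT = h2 := by
      have h0 : b' ⬝ᵥ xT = ∑ i, b' i * xT i := rfl
      have hterm : ∀ i ∈ Finset.univ, b' i * xT i
          = xT i ^ 2 - (c * s) * (xT i * (Pi.single j 1 : Fin n → ℝ) i) := fun i _ => by rw [hb'i i]; ring
      rw [h0, Finset.sum_congr rfl hterm, Finset.sum_sub_distrib, ← Finset.mul_sum,
        hsingle_xT, mul_zero, sub_zero]
    set W := insert j T with hWdef
    have hWS : Disjoint W S := by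
      rw [Finset.disjoint_left]
      intro i hi hiS
      rcases Finset.mem_insert.mp hi with h | h
      · exact hjS (h ▸ hiS)
      · exact (Finset.disjoint_left.mp hTS h) hiS
    have hWcard : W.card + S.card ≤ K + 1 := by
      rw [hWdef, Finset.card_insert_of_notMem hjT]
      omega
    have hxTW : sparseSupport xT ⊆ W := le_trans hxTsupp (Finset.subset_insert _ _)
    have hb'W : sparseSupport b' ⊆ W := hb'supp
    have hinner := OMPAux.ripB_inner hδ0 hδlt1 hRIP hdet b' xT W hb'W hxTW hWS hWcard
      hb'pos h2pos
    have hproj : (A *ᵥ b') ⬝ᵥ u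
        = (projPerp A S *ᵥ (A *ᵥ b')) ⬝ᵥ (projPerp A S *ᵥ (A *ᵥ xT)) := by
      rw [hudef]
      exact (OMPAux.projPerp_dot hdet _ _).symm
    have hb'w : b' ⬝ᵥ w = (∑ i, xT i * w i) - (c * s) * w j := by
      rw [hb'def, sub_dotProduct, smul_dotProduct, single_dotProduct]
      have : xT ⬝ᵥ w = ∑ i, xT i * w i := rfl
      rw [this, smul_eq_mul, one_mul]
    have hABu : (A *ᵥ b') ⬝ᵥ u = (∑ i, xT i * w i) - (c * s) * w j := by
      rw [← hdg b', hb'w]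
    -- bound the sqrt term
    have hsqrt : Real.sqrt (∑ i, b' i ^ 2) ≤ Real.sqrt ((K : ℝ) + 1) * Real.sqrt h2 := by
      rw [hb'sq, ← Real.sqrt_mul (by positivity : (0:ℝ) ≤ (K : ℝ) + 1)]
      apply Real.sqrt_le_sqrt
      nlinarith [hcK]
    have hsqh2 : Real.sqrt h2 * Real.sqrt h2 = h2 := Real.mul_self_sqrt h2pos.le
    have hsqh2nn : 0 ≤ Real.sqrt h2 := Real.sqrt_nonneg _
    have p3 : δ * Real.sqrt (∑ i, b' i ^ 2) * Real.sqrt h2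
        ≤ δ * Real.sqrt ((K : ℝ) + 1) * h2 := by
      have h1 : δ * Real.sqrt (∑ i, b' i ^ 2) ≤ δ * (Real.sqrt ((K : ℝ) + 1) * Real.sqrt h2) :=
        mul_le_mul_of_nonneg_left hsqrt hδ0
      have h2'' := mul_le_mul_of_nonneg_right h1 hsqh2nn
      calc δ * Real.sqrt (∑ i, b' i ^ 2) * Real.sqrt h2
          ≤ δ * (Real.sqrt ((K : ℝ) + 1) * Real.sqrt h2) * Real.sqrt h2 := h2''
        _ = δ * Real.sqrt ((K : ℝ) + 1) * (Real.sqrt h2 * Real.sqrt h2) := by ring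
        _ = δ * Real.sqrt ((K : ℝ) + 1) * h2 := by rw [hsqh2]
    have hchain : h2 - δ * Real.sqrt ((K : ℝ) + 1) * h2
        ≤ (∑ i, xT i * w i) - (c * s) * w j := by
      have h1 := hinner
      rw [hb'dotxT] at h1
      rw [← hABu, hproj]
      have : Real.sqrt (∑ i, xT i ^ 2) = Real.sqrt h2 := by rw [hh2]
      rw [this] at h1
      linarith [h1, p3]
    have hcsw : (c * s) * w j = c * supAbs Ωᶜ w := by
      rw [mul_assoc, hsw, hjeq]
    rw [ge_iff_le, ← mul_le_mul_iff_of_pos_right hc0]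
    have e1 : (1 - Real.sqrt ((K : ℝ) + 1) * δ) * (μ * c)
        ≤ (1 - Real.sqrt ((K : ℝ) + 1) * δ) * h2 :=
      mul_le_mul_of_nonneg_left hμc hqnn
    linarith [hchain, hsum_xw, hcsw, e1]
end
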